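/- For every λ ∈ K and every integer n ≥ 0: the kernel of the even part of D(n) is 3-dimensional, spanned by E3, E6 and −λE1 + (n+1−m)E4 + E5; and the kernel of the odd part of D(n) is spanned by O2, O5 and O1 + (n−m−λ)O6 when λ ≠ −(n+2) (so it is 3-dimensional), while for λ = −(n+2) it is 4-dimensional, spanned additionally by O3. -/
import Mathlib


namespace LinfCohomology

variable {K : Type*} [Field K] [CharZero K]

/- Cochain conventions: for `n ≥ 0`, the even part of `C(n)` has coordinates
`E1,…,E6` (for `φ^{1,0,n+1}_1, φ^{1,0,n+1}_2, φ^{0,1,n+1}_1, φ^{0,1,n+1}_2,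
φ^{0,0,n+2}_3, φ^{1,1,n}_3`) and the odd part has coordinates `O1,…,O6` (for
`ψ^{1,0,n+1}_3, ψ^{0,1,n+1}_3, ψ^{0,0,n+2}_1, ψ^{0,0,n+2}_2, ψ^{1,1,n}_1,
ψ^{1,1,n}_2`); `C(-1)` has even coordinates `E1,…,E5` and odd `O1,…,O4`. -/

/-- The even part of the coboundary operator `D(n)` of
`d_λ = ψ^{0,1,m+1}_3 + λψ^{1,1,m}_1`, for `n ≥ 0`:
`E1 ↦ -(n+1)O5`, `E2 ↦ -O1+(λ-n-1)O6`, `E3 ↦ 0`, `E4 ↦ -O2-λO5`,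
`E5 ↦ (n+1-m)O2-λmO5`, `E6 ↦ 0`. -/
def De (m : ℕ) (lam : K) (n : ℕ) : (Fin 6 → K) →ₗ[K] (Fin 6 → K) :=
  Matrix.mulVecLin
    !![0, -1, 0, 0, 0, 0;
       0, 0, 0, -1, (n : K) + 1 - (m : K), 0;
       0, 0, 0, 0, 0, 0;
       0, 0, 0, 0, 0, 0;
       -((n : K) + 1), 0, 0, -lam, -(lam * (m : K)), 0;
       0, lam - (n : K) - 1, 0, 0, 0, 0]

/-- The odd part of the coboundary operator `D(n)` of `d_λ`, for `n ≥ 0`: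
`O1 ↦ (λ+m-n)E6`, `O2 ↦ 0`, `O3 ↦ (λ+n+2)E3`, `O4 ↦ -λE1+(n+2)E4+E5`,
`O5 ↦ 0`, `O6 ↦ E6`. -/
def Do (m : ℕ) (lam : K) (n : ℕ) : (Fin 6 → K) →ₗ[K] (Fin 6 → K) :=
  Matrix.mulVecLin
    !![0, 0, 0, -lam, 0, 0;
       0, 0, 0, 0, 0, 0;
       0, 0, lam + (n : K) + 2, 0, 0, 0;
       0, 0, 0, (n : K) + 2, 0, 0;
       0, 0, 0, 1, 0, 0;
       lam + (m : K) - (n : K), 0, 0, 0, 0, 1]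

/-- The even part of `D(-1)` of `d_λ` (on degree-1 cochains):
`E1 ↦ 0`, `E2 ↦ -O1+λO6`, `E3 ↦ 0`, `E4 ↦ -O2-λO5`, `E5 ↦ -mO2-λmO5`. -/
def DeNeg1 (m : ℕ) (lam : K) : (Fin 5 → K) →ₗ[K] (Fin 6 → K) :=
  Matrix.mulVecLin
    !![0, -1, 0, 0, 0;
       0, 0, 0, -1, -(m : K);
       0, 0, 0, 0, 0;
       0, 0, 0, 0, 0;
       0, 0, 0, -lam, -(lam * (m : K));
       0, lam, 0, 0, 0]

/-- The odd part of `D(-1)` of `d_λ` (on degree-1 cochains):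
`O1 ↦ (λ+m+1)E6`, `O2 ↦ 0`, `O3 ↦ (λ+1)E3`, `O4 ↦ -λE1+E4+E5`. -/
def DoNeg1 (m : ℕ) (lam : K) : (Fin 4 → K) →ₗ[K] (Fin 6 → K) :=
  Matrix.mulVecLin
    !![0, 0, 0, -lam;
       0, 0, 0, 0;
       0, 0, lam + 1, 0;
       0, 0, 0, 1;
       0, 0, 0, 1;
       lam + (m : K) + 1, 0, 0, 0]

section aux

variable {α : Type*} (a : α)

private lemma c61 (u : Fin 5 → α) : Matrix.vecCons a u 1 = u 0 := rfl
private lemma c62 (u : Fin 5 → α) : Matrix.vecCons a u 2 = u 1 := rfl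
private lemma c63 (u : Fin 5 → α) : Matrix.vecCons a u 3 = u 2 := rfl
private lemma c64 (u : Fin 5 → α) : Matrix.vecCons a u 4 = u 3 := rfl
private lemma c65 (u : Fin 5 → α) : Matrix.vecCons a u 5 = u 4 := rfl
private lemma c51 (u : Fin 4 → α) : Matrix.vecCons a u 1 = u 0 := rfl
private lemma c52 (u : Fin 4 → α) : Matrix.vecCons a u 2 = u 1 := rfl
private lemma c53 (u : Fin 4 → α) : Matrix.vecCons a u 3 = u 2 := rfl
private lemma c54 (u : Fin 4 → α) : Matrix.vecCons a u 4 = u 3 := rfl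
private lemma c41 (u : Fin 3 → α) : Matrix.vecCons a u 1 = u 0 := rfl
private lemma c42 (u : Fin 3 → α) : Matrix.vecCons a u 2 = u 1 := rfl
private lemma c43 (u : Fin 3 → α) : Matrix.vecCons a u 3 = u 2 := rfl
private lemma c31 (u : Fin 2 → α) : Matrix.vecCons a u 1 = u 0 := rfl
private lemma c32 (u : Fin 2 → α) : Matrix.vecCons a u 2 = u 1 := rfl
private lemma c21 (u : Fin 1 → α) : Matrix.vecCons a u 1 = u 0 := rfl

end aux

private lemma range_three {α : Type*} (a b c : α) :
    Set.range ![a, b, c] = {a, b, c} := by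
  ext x; simp [Fin.exists_fin_succ]; tauto

private lemma range_four {α : Type*} (a b c d : α) :
    Set.range ![a, b, c, d] = {a, b, c, d} := by
  ext x; simp [Fin.exists_fin_succ]; tauto

private lemma ker_De_eq (m : ℕ) (lam : K) (n : ℕ) :
    LinearMap.ker (De m lam n) =
      Submodule.span K {(![0, 0, 1, 0, 0, 0] : Fin 6 → K),
        ![0, 0, 0, 0, 0, 1], ![-lam, 0, 0, (n : K) + 1 - (m : K), 1, 0]} := by
  apply le_antisymm
  · intro x hx
    rw [LinearMap.mem_ker] at hx
    have h0 := congrFun hx 0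
    have h1 := congrFun hx 1
    have h4 := congrFun hx 4
    simp [De, Matrix.mulVecLin_apply, Matrix.mulVec, dotProduct, Fin.sum_univ_six,
      c61, c62, c63, c64, c65, c51, c52, c53, c54, c41, c42, c43, c31, c32, c21] at h0 h1 h4
    have hn : ((n : K) + 1) ≠ 0 := by
      have := Nat.cast_add_one_ne_zero (R := K) n; push_cast at this; exact this
    have hx3 : x 3 = ((n : K) + 1 - m) * x 4 := by linear_combination -h1
    have hx0 : x 0 = -lam * x 4 := by
      apply mul_left_cancel₀ hn
      linear_combination -h4 - lam * hx3
    have hrep : x = x 2 • ![0, 0, 1, 0, 0, 0] + x 5 • ![0, 0, 0, 0, 0, 1]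
        + x 4 • ![-lam, 0, 0, (n : K) + 1 - (m : K), 1, 0] := by
      funext i
      fin_cases i <;>
        simp [c61, c62, c63, c64, c65, c51, c52, c53, c54, c41, c42, c43, c31, c32, c21,
          hx0, h0, hx3] <;> ring
    rw [hrep]
    refine Submodule.add_mem _ (Submodule.add_mem _ ?_ ?_) ?_ <;>
      exact Submodule.smul_mem _ _ (Submodule.subset_span (by simp))
  · rw [Submodule.span_le]
    intro y hy
    simp only [Set.mem_insert_iff, Set.mem_singleton_iff] at hy
    rcases hy with rfl | rfl | rfl <;>
      · simp only [SetLike.mem_coe, LinearMap.mem_ker]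
        funext i
        fin_cases i <;>
          (simp [De, Matrix.mulVecLin_apply, Matrix.mulVec, dotProduct, Fin.sum_univ_six,
            c61, c62, c63, c64, c65, c51, c52, c53, c54, c41, c42, c43, c31, c32, c21]; try ring)

private lemma finrank_De (m : ℕ) (lam : K) (n : ℕ) :
    Module.finrank K (LinearMap.ker (De m lam n)) = 3 := by
  rw [ker_De_eq, ← range_three]
  have hli : LinearIndependent K
      ![(![0, 0, 1, 0, 0, 0] : Fin 6 → K), ![0, 0, 0, 0, 0, 1],
        ![-lam, 0, 0, (n : K) + 1 - (m : K), 1, 0]] := by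
    rw [Fintype.linearIndependent_iff]
    intro g hg
    have h2 := congrFun hg 2
    have h5 := congrFun hg 5
    have h4 := congrFun hg 4
    simp [Fin.sum_univ_three, c61, c62, c63, c64, c65, c51, c52, c53, c54, c41, c42, c43,
      c31, c32, c21] at h2 h5 h4
    intro i
    fin_cases i <;> simp_all
  rw [finrank_span_eq_card hli]
  rfl

private lemma ker_Do_mem (m : ℕ) (lam : K) (n : ℕ) (x : Fin 6 → K)
    (hx : x ∈ LinearMap.ker (Do m lam n)) :
    x 3 = 0 ∧ (lam + (n : K) + 2 = 0 ∨ x 2 = 0) ∧ x 5 = ((n : K) - m - lam) * x 0 := by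
  rw [LinearMap.mem_ker] at hx
  have h2 := congrFun hx 2
  have h4 := congrFun hx 4
  have h5 := congrFun hx 5
  simp [Do, Matrix.mulVecLin_apply, Matrix.mulVec, dotProduct, Fin.sum_univ_six,
    c61, c62, c63, c64, c65, c51, c52, c53, c54, c41, c42, c43, c31, c32, c21] at h2 h4 h5
  refine ⟨h4, h2, by linear_combination h5⟩

private lemma Do_gen_mem (m : ℕ) (lam : K) (n : ℕ) :
    (![0, 1, 0, 0, 0, 0] : Fin 6 → K) ∈ LinearMap.ker (Do m lam n) ∧
    (![0, 0, 0, 0, 1, 0] : Fin 6 → K) ∈ LinearMap.ker (Do m lam n) ∧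
    (![1, 0, 0, 0, 0, (n : K) - m - lam] : Fin 6 → K) ∈ LinearMap.ker (Do m lam n) := by
  refine ⟨?_, ?_, ?_⟩ <;>
    · rw [LinearMap.mem_ker]
      funext i
      fin_cases i <;>
        (simp [Do, Matrix.mulVecLin_apply, Matrix.mulVec, dotProduct, Fin.sum_univ_six,
          c61, c62, c63, c64, c65, c51, c52, c53, c54, c41, c42, c43, c31, c32, c21]; try ring)

/-- For every `λ ∈ K` and `n ≥ 0`: the kernel of the even part of `D(n)` is
3-dimensional, spanned by `E3`, `E6` and `-λE1+(n+1-m)E4+E5`; the kernel of the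
odd part is spanned by `O2`, `O5` and `O1+(n-m-λ)O6` when `λ ≠ -(n+2)`
(3-dimensional), and for `λ = -(n+2)` it is 4-dimensional, spanned additionally
by `O3`. -/
theorem dLam_kernels (m : ℕ) (lam : K) (n : ℕ) :
    (LinearMap.ker (De m lam n) =
        Submodule.span K {(![0, 0, 1, 0, 0, 0] : Fin 6 → K),
          ![0, 0, 0, 0, 0, 1], ![-lam, 0, 0, (n : K) + 1 - (m : K), 1, 0]} ∧
      Module.finrank K (LinearMap.ker (De m lam n)) = 3) ∧
    (lam ≠ -((n : K) + 2) →
      LinearMap.ker (Do m lam n) =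
          Submodule.span K {(![0, 1, 0, 0, 0, 0] : Fin 6 → K),
            ![0, 0, 0, 0, 1, 0], ![1, 0, 0, 0, 0, (n : K) - (m : K) - lam]} ∧
        Module.finrank K (LinearMap.ker (Do m lam n)) = 3) ∧
    (lam = -((n : K) + 2) →
      LinearMap.ker (Do m lam n) =
          Submodule.span K {(![0, 1, 0, 0, 0, 0] : Fin 6 → K),
            ![0, 0, 0, 0, 1, 0], ![1, 0, 0, 0, 0, (n : K) - (m : K) - lam],
            ![0, 0, 1, 0, 0, 0]} ∧
        Module.finrank K (LinearMap.ker (Do m lam n)) = 4) := by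
  refine ⟨⟨ker_De_eq m lam n, finrank_De m lam n⟩, ?_, ?_⟩
  · intro hne
    have hker : LinearMap.ker (Do m lam n) =
        Submodule.span K {(![0, 1, 0, 0, 0, 0] : Fin 6 → K),
          ![0, 0, 0, 0, 1, 0], ![1, 0, 0, 0, 0, (n : K) - (m : K) - lam]} := by
      apply le_antisymm
      · intro x hx
        obtain ⟨h3, h2, h5⟩ := ker_Do_mem m lam n x hx
        have hlam : lam + (n : K) + 2 ≠ 0 := fun h => hne (by linear_combination h)
        have hx2 : x 2 = 0 := h2.resolve_left hlam
        have hrep : x = x 1 • ![0, 1, 0, 0, 0, 0] + x 4 • ![0, 0, 0, 0, 1, 0]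
            + x 0 • ![1, 0, 0, 0, 0, (n : K) - (m : K) - lam] := by
          funext i
          fin_cases i <;>
            simp [c61, c62, c63, c64, c65, c51, c52, c53, c54, c41, c42, c43, c31, c32, c21,
              h3, hx2, h5, mul_comm]
        rw [hrep]
        refine Submodule.add_mem _ (Submodule.add_mem _ ?_ ?_) ?_ <;>
          exact Submodule.smul_mem _ _ (Submodule.subset_span (by simp))
      · rw [Submodule.span_le]
        intro y hy
        obtain ⟨g1, g2, g3⟩ := Do_gen_mem m lam n
        simp only [Set.mem_insert_iff, Set.mem_singleton_iff] at hy
        rcases hy with rfl | rfl | rfl <;> assumption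
    refine ⟨hker, ?_⟩
    rw [hker, ← range_three]
    have hli : LinearIndependent K
        ![(![0, 1, 0, 0, 0, 0] : Fin 6 → K), ![0, 0, 0, 0, 1, 0],
          ![1, 0, 0, 0, 0, (n : K) - (m : K) - lam]] := by
      rw [Fintype.linearIndependent_iff]
      intro g hg
      have h1 := congrFun hg 1
      have h4 := congrFun hg 4
      have h0 := congrFun hg 0
      simp [Fin.sum_univ_three, c61, c62, c63, c64, c65, c51, c52, c53, c54, c41, c42, c43,
        c31, c32, c21] at h1 h4 h0
      intro i
      fin_cases i <;> simp_all
    rw [finrank_span_eq_card hli]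
    rfl
  · intro heq
    have hker : LinearMap.ker (Do m lam n) =
        Submodule.span K {(![0, 1, 0, 0, 0, 0] : Fin 6 → K),
          ![0, 0, 0, 0, 1, 0], ![1, 0, 0, 0, 0, (n : K) - (m : K) - lam],
          ![0, 0, 1, 0, 0, 0]} := by
      apply le_antisymm
      · intro x hx
        obtain ⟨h3, h2, h5⟩ := ker_Do_mem m lam n x hx
        have hrep : x = x 1 • ![0, 1, 0, 0, 0, 0] + x 4 • ![0, 0, 0, 0, 1, 0]
            + x 0 • ![1, 0, 0, 0, 0, (n : K) - (m : K) - lam]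
            + x 2 • ![0, 0, 1, 0, 0, 0] := by
          funext i
          fin_cases i <;>
            simp [c61, c62, c63, c64, c65, c51, c52, c53, c54, c41, c42, c43, c31, c32, c21,
              h3, h5, mul_comm]
        rw [hrep]
        refine Submodule.add_mem _ (Submodule.add_mem _ (Submodule.add_mem _ ?_ ?_) ?_) ?_ <;>
          exact Submodule.smul_mem _ _ (Submodule.subset_span (by simp))
      · rw [Submodule.span_le]
        intro y hy
        obtain ⟨g1, g2, g3⟩ := Do_gen_mem m lam n
        have g4 : (![0, 0, 1, 0, 0, 0] : Fin 6 → K) ∈ LinearMap.ker (Do m lam n) := by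
          rw [LinearMap.mem_ker]
          funext i
          fin_cases i <;>
            (simp [Do, Matrix.mulVecLin_apply, Matrix.mulVec, dotProduct,
              Fin.sum_univ_six, c61, c62, c63, c64, c65, c51, c52, c53, c54, c41, c42, c43,
              c31, c32, c21, heq]; try ring)
        simp only [Set.mem_insert_iff, Set.mem_singleton_iff] at hy
        rcases hy with rfl | rfl | rfl | rfl <;> assumption
    refine ⟨hker, ?_⟩
    rw [hker, ← range_four]
    have hli : LinearIndependent K
        ![(![0, 1, 0, 0, 0, 0] : Fin 6 → K), ![0, 0, 0, 0, 1, 0],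
          ![1, 0, 0, 0, 0, (n : K) - (m : K) - lam], ![0, 0, 1, 0, 0, 0]] := by
      rw [Fintype.linearIndependent_iff]
      intro g hg
      have h1 := congrFun hg 1
      have h4 := congrFun hg 4
      have h0 := congrFun hg 0
      have h2 := congrFun hg 2
      simp [Fin.sum_univ_four, c61, c62, c63, c64, c65, c51, c52, c53, c54, c41, c42, c43,
        c31, c32, c21] at h1 h4 h0 h2
      intro i
      fin_cases i <;> simp_all
    rw [finrank_span_eq_card hli]
    rfl

end LinfCohomology
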